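/- Let f_1, …, f_n be pairwise orthogonal central homogeneous idempotents of a G-graded ring R with f_1 + ⋯ + f_n = 1. Then R is graded NR-clean if and only if each corner ring f_iR is graded NR-clean. -/

import Mathlib

set_option linter.unusedSectionVars false

/-- An element is homogeneous w.r.t. a grading family `𝒜` if it lies in some component. -/
def Homogeneous {G : Type*} [Group G] {R : Type*} [Ring R]
    (𝒜 : G → AddSubgroup R) (x : R) : Prop := ∃ g, x ∈ 𝒜 g

/-- A graded-regular element: homogeneous `r` with `r = r * a * r` for some homogeneous `a`. -/
def GradedRegular {G : Type*} [Group G] {R : Type*} [Ring R]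
    (𝒜 : G → AddSubgroup R) (r : R) : Prop :=
  Homogeneous 𝒜 r ∧ ∃ a : R, Homogeneous 𝒜 a ∧ r = r * a * r

/-- Graded NR-clean: every homogeneous element is a sum of a graded-regular element
and a homogeneous nilpotent element. -/
def GradedNRClean {G : Type*} [Group G] {R : Type*} [Ring R]
    (𝒜 : G → AddSubgroup R) : Prop :=
  ∀ x : R, Homogeneous 𝒜 x →
    ∃ r n : R, GradedRegular 𝒜 r ∧ Homogeneous 𝒜 n ∧ IsNilpotent n ∧ x = r + n

/-- `𝒜` is a `G`-grading of the ring `R`. -/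
structure IsGrading {G : Type*} [Group G] [DecidableEq G] {R : Type*} [Ring R]
    (𝒜 : G → AddSubgroup R) : Prop where
  one_mem : (1 : R) ∈ 𝒜 1
  mul_mem : ∀ {g h : G} {a b : R}, a ∈ 𝒜 g → b ∈ 𝒜 h → a * b ∈ 𝒜 (g * h)
  isInternal : DirectSum.IsInternal 𝒜

section Proj
variable {G : Type*} [DecidableEq G] {R : Type*} [Ring R]
  (𝒜 : G → AddSubgroup R)

noncomputable def gproj (h : DirectSum.IsInternal 𝒜) (g : G) (x : R) : R :=
  (((AddEquiv.ofBijective (DirectSum.coeAddMonoidHom 𝒜) h).symm x) g : R)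

lemma gproj_add (h : DirectSum.IsInternal 𝒜) (g : G) (x y : R) :
    gproj 𝒜 h g (x + y) = gproj 𝒜 h g x + gproj 𝒜 h g y := by
  simp [gproj, map_add]

lemma gproj_symm_of (h : DirectSum.IsInternal 𝒜) {a : G} {x : R} (hx : x ∈ 𝒜 a) :
    (AddEquiv.ofBijective (DirectSum.coeAddMonoidHom 𝒜) h).symm x
      = DirectSum.of (fun g => 𝒜 g) a ⟨x, hx⟩ := by
  rw [AddEquiv.symm_apply_eq]
  exact (DirectSum.coeAddMonoidHom_of 𝒜 a ⟨x, hx⟩).symm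

lemma gproj_same (h : DirectSum.IsInternal 𝒜) {g : G} {x : R} (hx : x ∈ 𝒜 g) :
    gproj 𝒜 h g x = x := by
  rw [gproj, gproj_symm_of 𝒜 h hx, DirectSum.of_eq_same]

lemma gproj_ne (h : DirectSum.IsInternal 𝒜) {a g : G} (hne : a ≠ g) {x : R} (hx : x ∈ 𝒜 a) :
    gproj 𝒜 h g x = 0 := by
  rw [gproj, gproj_symm_of 𝒜 h hx, DirectSum.of_eq_of_ne _ _ _ hne.symm]
  rfl
end Proj

section RingLemmas
variable {R : Type*} [Ring R]

lemma pull_mul {e u v : R} (hc : e ∈ Set.center R) (he : e * e = e) :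
    (e * u) * (e * v) = e * (u * v) := by
  have hcomm := (Set.mem_center_iff.mp hc).comm
  rw [← mul_assoc, mul_assoc e u e, ← hcomm u, ← mul_assoc, he, mul_assoc]

lemma ortho_mul {e e' u v : R} (hc : e' ∈ Set.center R) (h0 : e * e' = 0)
    (hu : e * u = u) (hv : e' * v = v) : u * v = 0 := by
  have hcomm := (Set.mem_center_iff.mp hc).comm
  calc u * v = (e * u) * (e' * v) := by rw [hu, hv]
    _ = ((e * (u * e')) * v) := by rw [← mul_assoc, mul_assoc e u e']
    _ = ((e * (e' * u)) * v) := by rw [← hcomm u]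
    _ = ((e * e') * u) * v := by rw [← mul_assoc]
    _ = 0 := by rw [h0, zero_mul, zero_mul]

lemma diag_mul {n : ℕ} {f : Fin n → R} (hfc : ∀ i, f i ∈ Set.center R)
    (horth : ∀ i j, i ≠ j → f i * f j = 0) {u v : Fin n → R}
    (hu : ∀ i, f i * u i = u i) (hv : ∀ i, f i * v i = v i) :
    (∑ i, u i) * (∑ i, v i) = ∑ i, u i * v i := by
  rw [Finset.sum_mul_sum]
  refine Finset.sum_congr rfl fun i _ => ?_
  refine Finset.sum_eq_single i (fun j _ hji => ?_) (fun h => absurd (Finset.mem_univ i) h)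
  exact ortho_mul (hfc j) (horth i j (Ne.symm hji)) (hu i) (hv j)

end RingLemmas

/-- For pairwise orthogonal central homogeneous idempotents `f 1, …, f n`
summing to `1`, the ring `R` is graded NR-clean iff each corner ring `f i • R` is
graded NR-clean. -/
theorem stmt13 {G : Type*} [Group G] [DecidableEq G] {R : Type*} [Ring R]
    (𝒜 : G → AddSubgroup R) (hG : IsGrading 𝒜) {n : ℕ} (f : Fin n → R)
    (hfhom : ∀ i, f i ∈ 𝒜 1) (hfc : ∀ i, f i ∈ Set.center R)
    (hfi : ∀ i, f i * f i = f i) (horth : ∀ i j, i ≠ j → f i * f j = 0)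
    (hsum : ∑ i, f i = 1) :
    GradedNRClean 𝒜 ↔
      ∀ i, GradedNRClean (fun g => (𝒜 g).map (AddMonoidHom.mulLeft (f i))) := by
  -- membership facts about the corner subgroups
  have corner_mem : ∀ (i : Fin n) (g : G) (z : R),
      z ∈ (𝒜 g).map (AddMonoidHom.mulLeft (f i)) → z ∈ 𝒜 g ∧ f i * z = z := by
    intro i g z hz
    rcases hz with ⟨y, hy, rfl⟩
    constructor
    · have := hG.mul_mem (hfhom i) hy
      simpa using this
    · show f i * (f i * y) = f i * y
      rw [← mul_assoc, hfi]
  constructor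
  · -- R graded NR-clean → each corner graded NR-clean
    intro hR i x hx
    obtain ⟨g, hxg⟩ := hx
    obtain ⟨hxA, hfx⟩ := corner_mem i g x hxg
    obtain ⟨r, m, ⟨⟨a, hra⟩, w, ⟨h', hwh⟩, hrwr⟩, ⟨b, hmb⟩, hnil, hdec⟩ := hR x ⟨g, hxA⟩
    refine ⟨f i * r, f i * m,
      ⟨⟨a, ⟨r, hra, rfl⟩⟩, f i * w, ⟨h', ⟨w, hwh, rfl⟩⟩, ?_⟩,
      ⟨b, ⟨m, hmb, rfl⟩⟩, ?_, ?_⟩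
    · -- graded regularity in the corner
      rw [pull_mul (hfc i) (hfi i), pull_mul (hfc i) (hfi i), ← hrwr]
    · exact Commute.isNilpotent_mul_left
        (((Set.mem_center_iff.mp (hfc i)).comm m)) hnil
    · rw [← hfx, hdec, mul_add]
  · -- each corner graded NR-clean → R graded NR-clean
    intro hC x hx
    obtain ⟨g, hxg⟩ := hx
    have key : ∀ i : Fin n, ∃ r m w : R, r ∈ 𝒜 g ∧ m ∈ 𝒜 g ∧ w ∈ 𝒜 g⁻¹ ∧
        f i * r = r ∧ f i * m = m ∧ f i * w = w ∧ r = r * w * r ∧ IsNilpotent m ∧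
        f i * x = r + m := by
      intro i
      have hfxg : f i * x ∈ (𝒜 g).map (AddMonoidHom.mulLeft (f i)) := ⟨x, hxg, rfl⟩
      obtain ⟨r, m, ⟨⟨a, hra⟩, w, ⟨h', hwh⟩, hrwr⟩, ⟨b, hmb⟩, hnil, hdec⟩ :=
        hC i (f i * x) ⟨g, hfxg⟩
      obtain ⟨hraA, hfr⟩ := corner_mem i a r hra
      obtain ⟨hwhA, hfw⟩ := corner_mem i h' w hwh
      obtain ⟨hmbA, hfm⟩ := corner_mem i b m hmb
      have hfxA : f i * x ∈ 𝒜 g := (corner_mem i g _ hfxg).1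
      -- normalize the regularity witness
      have wit : ∀ r' : R, r' ∈ 𝒜 g → f i * r' = r' → r' = r' * w * r' →
          ∃ w' : R, w' ∈ 𝒜 g⁻¹ ∧ f i * w' = w' ∧ r' = r' * w' * r' := by
        intro r' hr'g hfr' hr'w
        by_cases hgh : g * h' * g = g
        · have h1 : g * h' = 1 := mul_right_cancel (hgh.trans (one_mul g).symm)
          have : h' = g⁻¹ := (inv_eq_of_mul_eq_one_right h1).symm
          exact ⟨w, this ▸ hwhA, hfw, hr'w⟩
        · -- then r' = 0
          have hmem : r' ∈ 𝒜 (g * h' * g) :=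
            hr'w ▸ hG.mul_mem (hG.mul_mem hr'g hwhA) hr'g
          have : r' = 0 := by
            have h1 := gproj_same 𝒜 hG.isInternal hr'g
            have h2 := gproj_ne 𝒜 hG.isInternal hgh hmem
            rw [h1] at h2; exact h2
          exact ⟨0, zero_mem _, mul_zero _, by rw [this]; simp⟩
      -- project the decomposition to degree g
      have hproj : f i * x = gproj 𝒜 hG.isInternal g r + gproj 𝒜 hG.isInternal g m := by
        rw [← gproj_add, ← hdec, gproj_same 𝒜 hG.isInternal hfxA]
      by_cases hag : a = g <;> by_cases hbg : b = g
      · subst hag; subst hbg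
        obtain ⟨w', hw1, hw2, hw3⟩ := wit r hraA hfr hrwr
        exact ⟨r, m, w', hraA, hmbA, hw1, hfr, hfm, hw2, hw3, hnil, hdec⟩
      · subst hag
        rw [gproj_same 𝒜 hG.isInternal hraA, gproj_ne 𝒜 hG.isInternal hbg hmbA] at hproj
        obtain ⟨w', hw1, hw2, hw3⟩ := wit r hraA hfr hrwr
        exact ⟨r, 0, w', hraA, zero_mem _, hw1, hfr, mul_zero _, hw2, hw3,
          IsNilpotent.zero, hproj⟩
      · subst hbg
        rw [gproj_ne 𝒜 hG.isInternal hag hraA, gproj_same 𝒜 hG.isInternal hmbA] at hproj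
        exact ⟨0, m, 0, zero_mem _, hmbA, zero_mem _, mul_zero _, hfm, mul_zero _,
          by simp, hnil, hproj⟩
      · rw [gproj_ne 𝒜 hG.isInternal hag hraA, gproj_ne 𝒜 hG.isInternal hbg hmbA] at hproj
        exact ⟨0, 0, 0, zero_mem _, zero_mem _, zero_mem _, mul_zero _, mul_zero _,
          mul_zero _, by simp, IsNilpotent.zero, hproj⟩
    choose rr mm ww hrg hmg hwg habr habm habw hreg hnil hdec using key
    refine ⟨∑ i, rr i, ∑ i, mm i,
      ⟨⟨g, AddSubgroup.sum_mem _ fun i _ => hrg i⟩, ∑ i, ww i,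
        ⟨g⁻¹, AddSubgroup.sum_mem _ fun i _ => hwg i⟩, ?_⟩,
      ⟨g, AddSubgroup.sum_mem _ fun i _ => hmg i⟩, ?_, ?_⟩
    · -- regularity of the sum
      rw [diag_mul hfc horth habr habw, diag_mul hfc horth
        (fun i => by rw [← mul_assoc, habr]) habr]
      exact Finset.sum_congr rfl fun i _ => hreg i
    · -- nilpotency of the sum
      refine Commute.isNilpotent_sum (fun i _ => hnil i) fun i j _ _ => ?_
      by_cases hij : i = j
      · subst hij; exact Commute.refl _
      · show mm i * mm j = mm j * mm i
        rw [ortho_mul (hfc j) (horth i j hij) (habm i) (habm j),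
          ortho_mul (hfc i) (horth j i (Ne.symm hij)) (habm j) (habm i)]
    · -- x equals the sum of the decompositions
      calc x = (∑ i, f i) * x := by rw [hsum, one_mul]
        _ = ∑ i, f i * x := by rw [Finset.sum_mul]
        _ = ∑ i, (rr i + mm i) := Finset.sum_congr rfl fun i _ => hdec i
        _ = (∑ i, rr i) + ∑ i, mm i := Finset.sum_add_distrib
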